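/- Let $U \subseteq \mathbb{R}^n$ have boundary of measure zero and define $N_r(U) = r^n \cdot \#(U \cap r\mathbb{Z}^n)$. If $\lim_{R \to \infty} \limsup_{r \to 0} N_r(U \setminus B_R) = 0$, where $B_R$ is the closed ball of radius $R$ centered at the origin, then $\lim_{r \to 0} N_r(U) = \operatorname{vol}(U)$ (in particular the limit exists and $\operatorname{vol}(U) < \infty$). -/

import Mathlib

open Filter MeasureTheory

/-- The lattice-point count `N_r(V) = r^n · #(V ∩ rℤⁿ)`, valued in `ℝ≥0∞` so that it is
defined also for sets with infinitely many lattice points. -/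
noncomputable def latCount (n : ℕ) (r : ℝ) (V : Set (Fin n → ℝ)) : ENNReal :=
  ENNReal.ofReal (r ^ n) * ({v : Fin n → ℤ | (fun i => r * (v i : ℝ)) ∈ V}.encard : ENNReal)

namespace LatAux


open Set Metric Bornology
open scoped NNReal ENNReal

variable {n : ℕ}

def cube (r : ℝ) (v : Fin n → ℤ) : Set (Fin n → ℝ) :=
  Set.univ.pi fun i => Set.Ico (r * v i) (r * v i + r)

lemma mem_cube_iff {r : ℝ} (hr : 0 < r) {x : Fin n → ℝ} {v : Fin n → ℤ} :
    x ∈ cube r v ↔ ∀ i, ⌊x i / r⌋ = v i := by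
  simp only [cube, Set.mem_pi, Set.mem_univ, forall_true_left, Set.mem_Ico]
  refine forall_congr' fun i => ?_
  rw [Int.floor_eq_iff, le_div_iff₀ hr, div_lt_iff₀ hr]
  push_cast
  constructor
  · rintro ⟨h1, h2⟩
    exact ⟨by linarith, by linarith⟩
  · rintro ⟨h1, h2⟩
    exact ⟨by linarith, by linarith⟩

lemma volume_cube {r : ℝ} (hr : 0 < r) (v : Fin n → ℤ) :
    volume (cube r v) = ENNReal.ofReal (r ^ n) := by
  have h : ∀ i : Fin n, volume (Set.Ico (r * v i) (r * v i + r)) = ENNReal.ofReal r := by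
    intro i
    rw [Real.volume_Ico, add_sub_cancel_left]
  rw [cube, volume_pi_pi]
  simp [h, Finset.prod_const, ← ENNReal.ofReal_pow hr.le]

lemma dist_le_of_mem_cube {r : ℝ} (hr : 0 < r) {x : Fin n → ℝ} {v : Fin n → ℤ}
    (hx : x ∈ cube r v) : dist (fun i => r * (v i : ℝ)) x ≤ r := by
  rw [dist_pi_le_iff hr.le]
  intro i
  have h := hx i (Set.mem_univ i)
  simp only [Set.mem_Ico] at h
  rw [Real.dist_eq, abs_le]
  constructor <;> [linarith [h.2]; linarith [h.1]]

lemma cube_disjoint {r : ℝ} (hr : 0 < r) {v w : Fin n → ℤ} (hvw : v ≠ w) :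
    Disjoint (cube r v) (cube r w) := by
  rw [Set.disjoint_left]
  intro x hxv hxw
  exact hvw (funext fun i => ((mem_cube_iff hr).1 hxv i).symm.trans ((mem_cube_iff hr).1 hxw i))

lemma latCount_eq {r : ℝ} (hr : 0 < r) (V : Set (Fin n → ℝ)) :
    latCount n r V
      = volume (⋃ v ∈ {v : Fin n → ℤ | (fun i => r * (v i : ℝ)) ∈ V}, cube r v) := by
  set S := {v : Fin n → ℤ | (fun i => r * (v i : ℝ)) ∈ V} with hS
  rw [Set.biUnion_eq_iUnion, measure_iUnion, latCount]
  · simp only [volume_cube hr]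
    rw [ENNReal.tsum_set_const, mul_comm]
  · intro a b hab
    exact cube_disjoint hr (fun hc => hab (Subtype.coe_injective hc))
  · exact fun v => MeasurableSet.univ_pi fun i => measurableSet_Ico

lemma latCount_le_cthickening {r : ℝ} (hr : 0 < r) (V : Set (Fin n → ℝ)) :
    latCount n r V ≤ volume (Metric.cthickening r V) := by
  rw [latCount_eq hr]
  refine measure_mono (Set.iUnion₂_subset fun v hv x hx => ?_)
  exact Metric.mem_cthickening_of_dist_le x _ r V hv
    (by rw [dist_comm]; exact dist_le_of_mem_cube hr hx)

lemma inner_le_latCount {r ε : ℝ} (hr : 0 < r) (hrε : r ≤ ε) (V : Set (Fin n → ℝ)) :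
    volume {x : Fin n → ℝ | Metric.closedBall x ε ⊆ V} ≤ latCount n r V := by
  rw [latCount_eq hr]
  refine measure_mono fun x hx => ?_
  have hmem : x ∈ cube r (fun i => ⌊x i / r⌋) := (mem_cube_iff hr).2 fun i => rfl
  refine Set.mem_biUnion ?_ hmem
  refine hx ?_
  exact Metric.mem_closedBall.mpr ((dist_le_of_mem_cube hr hmem).trans hrε)



open Set Metric Bornology
open scoped NNReal ENNReal

variable {n : ℕ}





lemma interior_le_liminf (V : Set (Fin n → ℝ)) :
    volume (interior V)
      ≤ liminf (fun r => latCount n r V) (nhdsWithin 0 (Set.Ioi 0)) := by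
  have key : ∀ ε : ℝ, 0 < ε → volume {x : Fin n → ℝ | Metric.closedBall x ε ⊆ V}
      ≤ liminf (fun r => latCount n r V) (nhdsWithin 0 (Set.Ioi 0)) := by
    intro ε hε
    refine le_liminf_of_le (by isBoundedDefault) ?_
    filter_upwards [Ioc_mem_nhdsGT_of_mem (Set.mem_Ico.mpr ⟨le_refl 0, hε⟩)] with r hr
    exact inner_le_latCount hr.1 hr.2 V
  have hA : ∀ k : ℕ, {x : Fin n → ℝ | Metric.closedBall x (1 / (k + 1 : ℝ)) ⊆ V} ⊆ interior V := by
    intro k x hx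
    refine mem_interior.mpr ⟨Metric.ball x (1 / (k + 1 : ℝ)), ?_, Metric.isOpen_ball,
      Metric.mem_ball_self (by positivity)⟩
    exact (Metric.ball_subset_closedBall).trans hx
  have hmono : Monotone fun k : ℕ => {x : Fin n → ℝ | Metric.closedBall x (1 / (k + 1 : ℝ)) ⊆ V} := by
    intro k l hkl x hx
    refine Subset.trans (Metric.closedBall_subset_closedBall ?_) hx
    apply one_div_le_one_div_of_le (by positivity)
    exact_mod_cast by omega
  have hunion : interior V = ⋃ k : ℕ, {x : Fin n → ℝ | Metric.closedBall x (1 / (k + 1 : ℝ)) ⊆ V} := by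
    apply Subset.antisymm
    · intro x hx
      obtain ⟨ε, hε, hball⟩ := Metric.isOpen_iff.1 isOpen_interior x hx
      obtain ⟨k, hk⟩ := exists_nat_one_div_lt hε
      refine Set.mem_iUnion.2 ⟨k, ?_⟩
      exact ((Metric.closedBall_subset_ball hk).trans hball).trans interior_subset
    · exact Set.iUnion_subset fun k => hA k
  rw [hunion, Directed.measure_iUnion hmono.directed_le]
  exact iSup_le fun k => key _ (by positivity)

lemma tendsto_latCount_of_isBounded {V : Set (Fin n → ℝ)} (hb : IsBounded V)
    (hfrV : volume (frontier V) = 0) :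
    Tendsto (fun r => latCount n r V) (nhdsWithin 0 (Set.Ioi 0)) (nhds (volume V)) := by
  have hsub : V ⊆ interior V ∪ frontier V := by
    rw [← closure_eq_interior_union_frontier]; exact subset_closure
  have hclosure : volume (closure V) ≤ volume V :=
    calc volume (closure V) = volume (interior V ∪ frontier V) := by
          rw [closure_eq_interior_union_frontier]
      _ ≤ volume (interior V) + volume (frontier V) := measure_union_le _ _
      _ = volume (interior V) := by rw [hfrV, add_zero]
      _ ≤ volume V := measure_mono interior_subset
  have hint : volume V ≤ volume (interior V) :=
    calc volume V ≤ volume (interior V ∪ frontier V) := measure_mono hsub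
      _ ≤ volume (interior V) + volume (frontier V) := measure_union_le _ _
      _ = volume (interior V) := by rw [hfrV, add_zero]
  have hliminf : volume V ≤ liminf (fun r => latCount n r V) (nhdsWithin 0 (Set.Ioi 0)) :=
    hint.trans (interior_le_liminf V)
  have hlimsup : limsup (fun r => latCount n r V) (nhdsWithin 0 (Set.Ioi 0)) ≤ volume V := by
    have hfin : ∃ R > 0, volume (Metric.cthickening R V) ≠ ⊤ :=
      ⟨1, one_pos, (IsBounded.measure_lt_top hb.cthickening).ne⟩
    have ht : Tendsto (fun r : ℝ => volume (Metric.cthickening r V))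
        (nhdsWithin 0 (Set.Ioi 0)) (nhds (volume (closure V))) :=
      (tendsto_measure_cthickening hfin).mono_left nhdsWithin_le_nhds
    calc limsup (fun r => latCount n r V) (nhdsWithin 0 (Set.Ioi 0))
        ≤ limsup (fun r => volume (Metric.cthickening r V)) (nhdsWithin 0 (Set.Ioi 0)) := by
          refine limsup_le_limsup ?_
          filter_upwards [self_mem_nhdsWithin] with r hr
          exact latCount_le_cthickening hr V
      _ = volume (closure V) := ht.limsup_eq
      _ ≤ volume V := hclosure
  exact tendsto_of_le_liminf_of_limsup_le hliminf hlimsup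

lemma latCount_split (r : ℝ) (U B : Set (Fin n → ℝ)) :
    latCount n r U = latCount n r (U ∩ B) + latCount n r (U \ B) := by
  unfold latCount
  rw [← mul_add]
  congr 1
  have hdisj : Disjoint {v : Fin n → ℤ | (fun i => r * (v i : ℝ)) ∈ U ∩ B}
      {v : Fin n → ℤ | (fun i => r * (v i : ℝ)) ∈ U \ B} := by
    rw [Set.disjoint_left]
    intro v hv1 hv2
    exact hv2.2 hv1.2
  have hun : {v : Fin n → ℤ | (fun i => r * (v i : ℝ)) ∈ U}
      = {v : Fin n → ℤ | (fun i => r * (v i : ℝ)) ∈ U ∩ B}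
        ∪ {v : Fin n → ℤ | (fun i => r * (v i : ℝ)) ∈ U \ B} := by
    ext v
    simp only [Set.mem_setOf_eq, Set.mem_union, Set.mem_inter_iff, Set.mem_diff]
    tauto
  rw [hun, Set.encard_union_eq hdisj, ENat.toENNReal_add]

lemma ennreal_limsup_add_le {ι : Type*} (l : Filter ι) (u v : ι → ℝ≥0∞) :
    limsup (fun i => u i + v i) l ≤ limsup u l + limsup v l := by
  rcases eq_top_or_lt_top (limsup u l) with hu | hu
  · simp [hu]
  rcases eq_top_or_lt_top (limsup v l) with hv | hv
  · simp [hv]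
  refine ENNReal.le_of_forall_pos_le_add fun ε hε _ => ?_
  have hhalf : (0 : ℝ≥0) < ε / 2 := by positivity
  have hu' : limsup u l < limsup u l + (ε / 2 : ℝ≥0) :=
    ENNReal.lt_add_right hu.ne (by exact_mod_cast hhalf.ne')
  have hv' : limsup v l < limsup v l + (ε / 2 : ℝ≥0) :=
    ENNReal.lt_add_right hv.ne (by exact_mod_cast hhalf.ne')
  refine limsup_le_of_le (by isBoundedDefault) ?_
  filter_upwards [eventually_lt_of_limsup_lt hu', eventually_lt_of_limsup_lt hv'] with i h1 h2
  calc u i + v i ≤ (limsup u l + (ε / 2 : ℝ≥0)) + (limsup v l + (ε / 2 : ℝ≥0)) :=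
        add_le_add h1.le h2.le
    _ = limsup u l + limsup v l + (((ε / 2 : ℝ≥0) : ℝ≥0∞) + ((ε / 2 : ℝ≥0) : ℝ≥0∞)) := by ring
    _ = limsup u l + limsup v l + ε := by rw [← ENNReal.coe_add, add_halves]

lemma sphere_vol_zero {R : ℝ} (hR : 0 < R) :
    volume (Metric.sphere (0 : Fin n → ℝ) R) = 0 := by
  rcases Nat.eq_zero_or_pos n with hn | hn
  · subst hn
    have : Metric.sphere (0 : Fin 0 → ℝ) R = ∅ := by
      ext x
      simp only [Metric.mem_sphere, Set.mem_empty_iff_false, iff_false]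
      rw [Subsingleton.elim x 0, dist_self]
      exact hR.ne
    rw [this, measure_empty]
  · have : Nontrivial (Fin n → ℝ) := by
      refine ⟨0, 1, fun hc => ?_⟩
      have := congrFun hc ⟨0, hn⟩
      norm_num at this
    exact Measure.addHaar_sphere (μ := volume) 0 R


end LatAux

open LatAux Set Metric Bornology in
/-- Let `U ⊆ ℝⁿ` have boundary of measure zero.  If
`lim_{R → ∞} limsup_{r → 0⁺} N_r(U \ B_R) = 0`, where `B_R` is the closed ball of radius
`R` about the origin, then `vol(U) < ∞` and `N_r(U) → vol(U)` as `r → 0⁺`. -/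
theorem stmt10 (n : ℕ) (U : Set (Fin n → ℝ)) (hfr : volume (frontier U) = 0)
    (h : Tendsto
      (fun R : ℝ => Filter.limsup
        (fun r : ℝ => latCount n r (U \ Metric.closedBall 0 R))
        (nhdsWithin 0 (Set.Ioi 0)))
      atTop (nhds 0)) :
    volume U ≠ ⊤ ∧
      Tendsto (fun r : ℝ => latCount n r U) (nhdsWithin 0 (Set.Ioi 0)) (nhds (volume U)) := by
  set l := nhdsWithin (0 : ℝ) (Set.Ioi 0) with hl
  have hUint : volume U ≤ volume (interior U) := by
    calc volume U ≤ volume (interior U ∪ frontier U) := by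
          refine measure_mono ?_
          rw [← closure_eq_interior_union_frontier]
          exact subset_closure
      _ ≤ volume (interior U) + volume (frontier U) := measure_union_le _ _
      _ = volume (interior U) := by rw [hfr, add_zero]
  -- the interior tail bound
  have hIntTail : ∀ R : ℝ, volume (interior U \ Metric.closedBall 0 R)
      ≤ limsup (fun r => latCount n r (U \ Metric.closedBall 0 R)) l := by
    intro R
    have hopen : IsOpen (interior U \ Metric.closedBall 0 R) :=
      isOpen_interior.sdiff Metric.isClosed_closedBall
    calc volume (interior U \ Metric.closedBall 0 R)
        ≤ volume (interior (U \ Metric.closedBall 0 R)) := by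
          refine measure_mono (interior_maximal ?_ hopen)
          exact diff_subset_diff_left interior_subset
      _ ≤ liminf (fun r => latCount n r (U \ Metric.closedBall 0 R)) l :=
          interior_le_liminf _
      _ ≤ limsup (fun r => latCount n r (U \ Metric.closedBall 0 R)) l :=
          liminf_le_limsup
  have htail : ∀ R : ℝ, volume (U \ Metric.closedBall 0 R)
      ≤ limsup (fun r => latCount n r (U \ Metric.closedBall 0 R)) l := by
    intro R
    calc volume (U \ Metric.closedBall 0 R)
        ≤ volume ((interior U \ Metric.closedBall 0 R) ∪ frontier U) := by
          refine measure_mono fun x hx => ?_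
          have : x ∈ interior U ∪ frontier U := by
            rw [← closure_eq_interior_union_frontier]; exact subset_closure hx.1
          rcases this with hx' | hx'
          · exact Or.inl ⟨hx', hx.2⟩
          · exact Or.inr hx'
      _ ≤ volume (interior U \ Metric.closedBall 0 R) + volume (frontier U) :=
          measure_union_le _ _
      _ = volume (interior U \ Metric.closedBall 0 R) := by rw [hfr, add_zero]
      _ ≤ _ := hIntTail R
  -- finiteness
  have hvolU : volume U ≠ ⊤ := by
    obtain ⟨R₀, hR₀, _⟩ := ((h.eventually_le_const (by norm_num : (0:ENNReal) < 1)).and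
      (eventually_ge_atTop (1:ℝ))).exists
    have hfin : volume U ≤ volume (Metric.closedBall (0 : Fin n → ℝ) R₀) + 1 := by
      calc volume U ≤ volume (interior U) := hUint
        _ = volume (interior U ∩ Metric.closedBall 0 R₀)
            + volume (interior U \ Metric.closedBall 0 R₀) :=
            (measure_inter_add_diff _ measurableSet_closedBall).symm
        _ ≤ volume (Metric.closedBall (0 : Fin n → ℝ) R₀) + 1 :=
            add_le_add (measure_mono inter_subset_right) ((hIntTail R₀).trans hR₀)
    exact ne_top_of_le_ne_top
      (by simp [ENNReal.add_ne_top, (IsBounded.measure_lt_top isBounded_closedBall).ne]) hfin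
  refine ⟨hvolU, ?_⟩
  -- for each ε > 0 pick a good radius
  have key : ∀ ε : ENNReal, 0 < ε → ∃ R : ℝ, 1 ≤ R ∧
      limsup (fun r => latCount n r (U \ Metric.closedBall 0 R)) l ≤ ε ∧
      Tendsto (fun r => latCount n r (U ∩ Metric.closedBall 0 R)) l
        (nhds (volume (U ∩ Metric.closedBall 0 R))) := by
    intro ε hε
    obtain ⟨R, hRε, hR1⟩ := ((h.eventually_le_const hε).and (eventually_ge_atTop (1:ℝ))).exists
    refine ⟨R, hR1, hRε, ?_⟩
    have hb : IsBounded (U ∩ Metric.closedBall (0 : Fin n → ℝ) R) :=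
      isBounded_closedBall.subset inter_subset_right
    have hfrV : volume (frontier (U ∩ Metric.closedBall (0 : Fin n → ℝ) R)) = 0 := by
      have hsub : frontier (U ∩ Metric.closedBall (0 : Fin n → ℝ) R)
          ⊆ frontier U ∪ Metric.sphere 0 R := by
        refine (frontier_inter_subset _ _).trans ?_
        refine union_subset_union ?_ ?_
        · exact fun x hx => hx.1
        · exact fun x hx => frontier_closedBall_subset_sphere hx.2
      refine le_antisymm ?_ zero_le
      calc volume (frontier (U ∩ Metric.closedBall (0 : Fin n → ℝ) R))
          ≤ volume (frontier U ∪ Metric.sphere 0 R) := measure_mono hsub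
        _ ≤ volume (frontier U) + volume (Metric.sphere (0 : Fin n → ℝ) R) :=
            measure_union_le _ _
        _ = 0 := by rw [hfr, sphere_vol_zero (lt_of_lt_of_le one_pos hR1), add_zero]
    exact tendsto_latCount_of_isBounded hb hfrV
  have hliminf : volume U ≤ liminf (fun r => latCount n r U) l := by
    rcases eq_top_or_lt_top (liminf (fun r => latCount n r U) l) with htop | hlt
    · rw [htop]; exact le_top
    refine ENNReal.le_of_forall_pos_le_add fun ε hε _ => ?_
    obtain ⟨R, hR1, hRε, hg⟩ := key ε (by exact_mod_cast hε)
    calc volume U ≤ volume (U ∩ Metric.closedBall 0 R)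
          + volume (U \ Metric.closedBall 0 R) := by
          conv_lhs => rw [← Set.inter_union_diff U (Metric.closedBall 0 R)]
          exact measure_union_le _ _
      _ ≤ volume (U ∩ Metric.closedBall 0 R) + ε :=
          add_le_add_right ((htail R).trans hRε) _
      _ = liminf (fun r => latCount n r (U ∩ Metric.closedBall 0 R)) l + ε := by
          rw [hg.liminf_eq]
      _ ≤ liminf (fun r => latCount n r U) l + ε := by
          refine add_le_add_left (liminf_le_liminf ?_) _
          refine Eventually.of_forall fun r => ?_
          rw [latCount_split r U (Metric.closedBall 0 R)]
          exact le_self_add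
  have hlimsup : limsup (fun r => latCount n r U) l ≤ volume U := by
    refine ENNReal.le_of_forall_pos_le_add fun ε hε _ => ?_
    obtain ⟨R, hR1, hRε, hg⟩ := key ε (by exact_mod_cast hε)
    calc limsup (fun r => latCount n r U) l
        = limsup (fun r => latCount n r (U ∩ Metric.closedBall 0 R)
            + latCount n r (U \ Metric.closedBall 0 R)) l := by
          congr 1
          exact funext fun r => latCount_split r U (Metric.closedBall 0 R)
      _ ≤ limsup (fun r => latCount n r (U ∩ Metric.closedBall 0 R)) l
            + limsup (fun r => latCount n r (U \ Metric.closedBall 0 R)) l :=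
          ennreal_limsup_add_le _ _ _
      _ ≤ volume (U ∩ Metric.closedBall 0 R) + ε := add_le_add hg.limsup_eq.le hRε
      _ ≤ volume U + ε := add_le_add_left (measure_mono inter_subset_left) _
  exact tendsto_of_le_liminf_of_limsup_le hliminf hlimsup
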